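/- (The 2-hooked construction.) Let a, b, c ∈ ℤ/mℤ with a, b ≠ 0, let S' ⊆ ℤ/mℤ with 0 ∈ S' and c ∉ S', and let G = B(m;{a,−a}, S' ∪ {c}, {b,−b}) be connected with gcd(m, S' ∪ {c}) > 1 and gcd(m, {a} ∪ S' ∪ {b}) > 1. Let G' = B(m;{a,−a}, S', {b,−b}) and let K be the connected component of the vertex u₀ in G'. Assume that the subgraph induced on K has a Hamiltonian cycle containing at least one outer edge and at least one inner edge, and that it has either a Hamiltonian path from u₀ to u_b or a Hamiltonian path from v₀ to v_a. Then G has a Hamiltonian cycle. -/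

import Mathlib

/-- The bicirculant graph `B(m; R, S, T)` on vertex set `ZMod m × Bool`:
`(i, false)` is the outer vertex `u_i`, `(i, true)` is the inner vertex `v_i`.
Edges: `u_i u_{i+j}` for `j ∈ R`, `v_i v_{i+j}` for `j ∈ T`, `u_i v_{i+j}` for `j ∈ S`. -/
def bicirculant (m : ℕ) (R S T : Finset (ZMod m)) : SimpleGraph (ZMod m × Bool) :=
  SimpleGraph.fromRel (fun x y =>
    (x.2 = false ∧ y.2 = false ∧ y.1 - x.1 ∈ R) ∨
    (x.2 = true ∧ y.2 = true ∧ y.1 - x.1 ∈ T) ∨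
    (x.2 = false ∧ y.2 = true ∧ y.1 - x.1 ∈ S))

/-- `gcd(m, X)`: the gcd of `m` together with the natural-number representatives
(in `{0, …, m-1}`) of the elements of `X`. -/
def gcdSet (m : ℕ) (X : Finset (ZMod m)) : ℕ :=
  Nat.gcd m (X.gcd ZMod.val)

/-- Every subset of a finite vertex type is a finite type (so that induced subgraphs on
vertex subsets can be said to be hamiltonian). -/
noncomputable instance bicircSubsetFintype {V : Type*} [Fintype V] (s : Set V) : Fintype s :=
  Fintype.ofFinite _


open List

section ListLemmas
variable {α : Type*}

/-- In a Bool list with no two adjacent `true`s and ending in `false`,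
`count true ≤ count false`. -/
theorem boolcount : ∀ (l : List Bool), l.IsChain (fun x y => ¬(x = true ∧ y = true)) →
    l.getLast? = some false → l.count true ≤ l.count false
  | [] => by simp
  | [x] => by
      intro _ h
      simp only [getLast?_singleton, Option.some.injEq] at h
      subst h; simp
  | x :: y :: t => by
      intro hc hl
      have hc1 : ¬(x = true ∧ y = true) ∧ IsChain (fun x y => ¬(x = true ∧ y = true)) (y :: t) :=
        (List.isChain_cons_cons).1 hc
      have hl1 : (y :: t).getLast? = some false := by
        rwa [List.getLast?_cons_cons] at hl
      have ih := boolcount (y :: t) hc1.2 hl1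
      cases x with
      | false => simpa [List.count_cons] using Nat.le_succ_of_le ih
      | true =>
          have hy : y = false := by
            cases y
            · rfl
            · exact absurd ⟨rfl, rfl⟩ hc1.1
          subst hy
          cases t with
          | nil => simp
          | cons z t' =>
              have hl2 : (z :: t').getLast? = some false := by
                rwa [List.getLast?_cons_cons] at hl1
              have hc2 : IsChain (fun x y => ¬(x = true ∧ y = true)) (z :: t') :=
                ((List.isChain_cons_cons).1 hc1.2).2
              have ih2 := boolcount (z :: t') hc2 hl2
              have e1 : List.count true (true :: false :: z :: t') =
                  List.count true (z :: t') + 1 := by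
                rw [List.count_cons_self, List.count_cons_of_ne (by simp)]
              have e2 : List.count false (true :: false :: z :: t') =
                  List.count false (z :: t') + 1 := by
                rw [List.count_cons_of_ne (by simp), List.count_cons_self]
              omega

theorem boolcount_strict (l : List Bool) (hc : l.IsChain (fun x y => ¬(x = true ∧ y = true)))
    (hh : l.head? = some false) (hl : l.getLast? = some false) :
    l.count true < l.count false := by
  cases l with
  | nil => simp at hh
  | cons x t =>
      have hx : x = false := by simpa using hh
      subst hx
      cases t with
      | nil => simp
      | cons y t' =>
          have hl1 : (y :: t').getLast? = some false := by
            rwa [List.getLast?_cons_cons] at hl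
          have hc1 := (List.isChain_cons_cons).1 hc
          have := boolcount (y :: t') hc1.2 hl1
          have e1 : List.count true (false :: y :: t') = List.count true (y :: t') := by
            rw [List.count_cons_of_ne (by simp)]
          have e2 : List.count false (false :: y :: t') = List.count false (y :: t') + 1 := by
            rw [List.count_cons_self]
          omega

/-- Either a list has no two adjacent elements satisfying `P`, or it splits at such a pair. -/
theorem find_pair (P : α → Prop) : ∀ (l : List α),
    l.IsChain (fun x y => ¬(P x ∧ P y)) ∨
      ∃ A q q' B, l = A ++ q :: q' :: B ∧ P q ∧ P q'
  | [] => Or.inl (by simp)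
  | [x] => Or.inl (by simp)
  | x :: y :: t => by
      by_cases hxy : P x ∧ P y
      · exact Or.inr ⟨[], x, y, t, by simp, hxy.1, hxy.2⟩
      · rcases find_pair P (y :: t) with h | ⟨A, q, q', B, he, hq, hq'⟩
        · exact Or.inl ((List.isChain_cons_cons).2 ⟨hxy, h⟩)
        · exact Or.inr ⟨x :: A, q, q', B, by simp [he], hq, hq'⟩

end ListLemmas

section WalkLemmas

open SimpleGraph Walk

variable {V : Type*} {G : SimpleGraph V}

/-- Decomposition of a walk at an edge. -/
theorem mem_edges_decomp {y z : V} {u v : V} (w : G.Walk u v) (h : s(y, z) ∈ w.edges) :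
    (∃ (w₁ : G.Walk u y) (w₂ : G.Walk z v), w.support = w₁.support ++ w₂.support) ∨
    (∃ (w₁ : G.Walk u z) (w₂ : G.Walk y v), w.support = w₁.support ++ w₂.support) := by
  induction w with
  | nil => simp at h
  | @cons a b c hab w' ih =>
      rw [Walk.edges_cons, List.mem_cons] at h
      rcases h with h | h
      · rw [Sym2.eq_iff] at h
        rcases h with ⟨h1, h2⟩ | ⟨h1, h2⟩
        · subst h1; subst h2
          exact Or.inl ⟨Walk.nil, w', by simp⟩
        · subst h1; subst h2
          exact Or.inr ⟨Walk.nil, w', by simp⟩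
      · rcases ih h with ⟨w₁, w₂, hs⟩ | ⟨w₁, w₂, hs⟩
        · exact Or.inl ⟨Walk.cons hab w₁, w₂, by simp [hs]⟩
        · exact Or.inr ⟨Walk.cons hab w₁, w₂, by simp [hs]⟩

/-- Build a walk from a list which is a chain of adjacent vertices. -/
theorem walk_of_chain : ∀ (l : List V) (x y : V), l.IsChain G.Adj → l.head? = some x →
    l.getLast? = some y → ∃ w : G.Walk x y, w.support = l
  | [], x, y, _, hh, _ => by simp at hh
  | [z], x, y, _, hh, hl => by
      simp only [head?_cons, Option.some.injEq] at hh
      simp only [getLast?_singleton, Option.some.injEq] at hl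
      subst hh; subst hl
      exact ⟨Walk.nil, rfl⟩
  | z :: z' :: t, x, y, hc, hh, hl => by
      simp only [head?_cons, Option.some.injEq] at hh
      subst hh
      have hc1 := (List.isChain_cons_cons).1 hc
      have hl1 : (z' :: t).getLast? = some y := by rwa [List.getLast?_cons_cons] at hl
      obtain ⟨w', hw'⟩ := walk_of_chain (z' :: t) z' y hc1.2 rfl hl1
      exact ⟨Walk.cons hc1.1 w', by simp [hw']⟩

/-- A closed nonnil walk visits its basepoint at least twice in its support. -/
theorem two_le_count_support [DecidableEq V] {u : V} (w : G.Walk u u) (hw : ¬ w.Nil) :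
    2 ≤ w.support.count u := by
  obtain ⟨x, h, q, rfl⟩ := (Walk.not_nil_iff).1 hw
  rw [Walk.support_cons, List.count_cons_self]
  have : u ∈ q.support := q.end_mem_support
  have := List.count_pos_iff.2 this
  omega

end WalkLemmas

section WalkLemmas2

open SimpleGraph Walk

variable {V : Type*} [DecidableEq V] {G : SimpleGraph V}

/-- From a nodup covering cyclic chain list of length ≥ 3, get a Hamiltonian cycle. -/
theorem ham_of_list [Fintype V] (L : List V) (hnd : L.Nodup) (hch : L.IsChain G.Adj)
    (hcov : ∀ v, v ∈ L) {x y : V} (hhead : L.head? = some x) (hlast : L.getLast? = some y)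
    (hadj : G.Adj y x) (hlen : 3 ≤ L.length) :
    ∃ a, ∃ p : G.Walk a a, p.IsHamiltonianCycle := by
  obtain ⟨w, hw⟩ := walk_of_chain L x y hch hhead hlast
  have hwpath : w.IsPath := (Walk.isPath_def w).2 (hw ▸ hnd)
  have hnotmem : s(y, x) ∉ w.edges := by
    intro hmem
    rcases mem_edges_decomp w hmem with ⟨w₁, w₂, hs⟩ | ⟨w₁, w₂, hs⟩
    · -- w₁ : Walk x y, w₂ : Walk x y : y appears in both
      have h1 : y ∈ w₁.support := w₁.end_mem_support
      have h2 : y ∈ w₂.support := w₂.end_mem_support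
      have hL : L = w₁.support ++ w₂.support := by rw [← hw, hs]
      rw [hL] at hnd
      exact (List.disjoint_of_nodup_append hnd) h1 h2
    · -- w₁ : Walk x x, w₂ : Walk y y
      by_cases h1 : w₁.Nil
      · by_cases h2 : w₂.Nil
        · rw [h1.eq_nil, h2.eq_nil] at hs
          have hL : L = [x] ++ [y] := by rw [← hw, hs]; rfl
          rw [hL] at hlen
          simp at hlen
        · have hc := two_le_count_support w₂ h2
          have hL : L = w₁.support ++ w₂.support := by rw [← hw, hs]
          rw [hL, List.nodup_append] at hnd
          have := List.nodup_iff_count_le_one.1 hnd.2.1 y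
          omega
      · have hc := two_le_count_support w₁ h1
        have hL : L = w₁.support ++ w₂.support := by rw [← hw, hs]
        rw [hL, List.nodup_append] at hnd
        have := List.nodup_iff_count_le_one.1 hnd.1 x
        omega
  have hcyc : (Walk.cons hadj w).IsCycle :=
    (Walk.cons_isCycle_iff w hadj).2 ⟨hwpath, hnotmem⟩
  refine ⟨y, Walk.cons hadj w, hcyc, ?_⟩
  intro v
  have hnn : ¬ (Walk.cons hadj w).Nil := Walk.not_nil_cons
  rw [Walk.support_tail_of_not_nil _ hnn, Walk.support_cons, List.tail_cons, hw]
  exact le_antisymm (List.nodup_iff_count_le_one.1 hnd v) (List.count_pos_iff.2 (hcov v))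

/-- Splitting a Hamiltonian cycle at one of its edges gives a Hamiltonian "path list". -/
theorem cycle_split {x : V} (p : G.Walk x x) (hp : p.IsHamiltonianCycle) {y z : V}
    (he : s(y, z) ∈ p.edges) :
    ∃ L : List V, L.Nodup ∧ L.IsChain G.Adj ∧ (∀ v, v ∈ L) ∧
      ((L.head? = some y ∧ L.getLast? = some z) ∨ (L.head? = some z ∧ L.getLast? = some y)) := by
  have hy : y ∈ p.support := hp.mem_support y
  set q := p.rotate y hy with hq
  have hqc : q.IsCycle := hp.isCycle.rotate hy
  have hqe : s(y, z) ∈ q.edges := by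
    rw [(p.rotate_edges y hy).mem_iff]; exact he
  have hrot : q.support.tail ~r p.support.tail := p.support_rotate y hy
  have hcount : ∀ v, q.support.tail.count v = 1 := by
    intro v
    rw [hrot.perm.count_eq]
    have := hp.isHamiltonian_tail v
    rwa [Walk.support_tail_of_not_nil _ hp.isCycle.not_nil] at this
  have hqsup : q.support = y :: q.support.tail := q.support_eq_cons
  have hcountq : ∀ v, q.support.count v = (if v = y then 2 else 1) := by
    intro v
    rw [hqsup]
    by_cases hv : v = y
    · subst hv; rw [List.count_cons_self, hcount]; simp
    · rw [List.count_cons_of_ne (Ne.symm hv), hcount]; simp [hv]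
  rcases mem_edges_decomp q hqe with ⟨w₁, w₂, hs⟩ | ⟨w₁, w₂, hs⟩
  · -- w₁ : Walk y y, w₂ : Walk z y
    by_cases h1 : w₁.Nil
    · rw [h1.eq_nil] at hs
      simp only [Walk.support_nil, List.singleton_append] at hs
      have hTeq : q.support.tail = w₂.support := by
        have hs' : y :: q.support.tail = y :: w₂.support := hqsup.symm.trans hs
        injection hs' with _ h
      refine ⟨w₂.support, ?_, w₂.isChain_adj_support, ?_, Or.inr ⟨?_, ?_⟩⟩
      · rw [← hTeq]; exact List.nodup_iff_count_le_one.2 (fun v => le_of_eq (hcount v))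
      · intro v; rw [← hTeq]; exact List.count_pos_iff.1 (by rw [hcount]; norm_num)
      · rw [w₂.support_eq_cons]; rfl
      · rw [List.getLast?_eq_getLast (by simp), w₂.getLast_support]
    · exfalso
      have hc1 : 2 ≤ w₁.support.count y := two_le_count_support w₁ h1
      have hc2 : 1 ≤ w₂.support.count y :=
        List.count_pos_iff.2 w₂.end_mem_support
      have : q.support.count y = w₁.support.count y + w₂.support.count y := by
        rw [hs, List.count_append]
      rw [hcountq] at this
      simp at this; omega
  · -- w₁ : Walk y z, w₂ : Walk y y
    by_cases h2 : w₂.Nil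
    · rw [h2.eq_nil] at hs
      simp only [Walk.support_nil] at hs
      refine ⟨w₁.support, ?_, w₁.isChain_adj_support, ?_, Or.inl ⟨?_, ?_⟩⟩
      · -- nodup: count ≤ 1 in w₁.support
        rw [List.nodup_iff_count_le_one]
        intro v
        have : q.support.count v = w₁.support.count v + 1 * [y].count v := by
          rw [hs, List.count_append]; simp
        rw [hcountq] at this
        by_cases hv : v = y
        · subst hv; simp at this; omega
        · simp [hv] at this; omega
      · intro v
        have : q.support.count v = w₁.support.count v + [y].count v := by
          rw [hs, List.count_append]
        rw [hcountq] at this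
        rw [← List.count_pos_iff]
        by_cases hv : v = y
        · subst hv; simp at this; omega
        · have h0 : [y].count v = 0 := List.count_eq_zero.2 (by simp [hv])
          rw [if_neg hv, h0] at this; omega
      · rw [w₁.support_eq_cons]; rfl
      · rw [List.getLast?_eq_getLast (by simp), w₁.getLast_support]
    · exfalso
      have hc1 : 2 ≤ w₂.support.count y := two_le_count_support w₂ h2
      have hc2 : 1 ≤ w₁.support.count y :=
        List.count_pos_iff.2 w₁.start_mem_support
      have : q.support.count y = w₁.support.count y + w₂.support.count y := by
        rw [hs, List.count_append]
      rw [hcountq] at this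
      simp at this; omega

end WalkLemmas2

section Assemble

open SimpleGraph

/-- Core assembly: build a Hamiltonian cycle in `Γ` from one "cycle minus an edge" list `M`
and copies of a "path" list `LP`, spliced across cosets of `W` using spokes of step `γ`. -/
theorem assemble {m : ℕ} [NeZero m] (Γ : SimpleGraph (ZMod m × Bool)) (σ : Bool) (γ β : ZMod m)
    (W : AddSubgroup (ZMod m)) (d : ℕ)
    (hsh : ∀ (t : ZMod m) (x y : ZMod m × Bool), Γ.Adj x y → Γ.Adj (x.1 + t, x.2) (y.1 + t, y.2))
    (hspoke : ∀ h : ZMod m, Γ.Adj (h, σ) (h + γ, !σ))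
    (hinner : ∀ x y : ZMod m, Γ.Adj (x, !σ) (y, !σ) → y - x = β ∨ x - y = β)
    (hpart : ∀ i : ZMod m, ∃! j : ℕ, j < d ∧ i - (j : ZMod m) * γ ∈ W)
    (hcard : 3 ≤ Fintype.card (ZMod m × Bool))
    (LP : List (ZMod m × Bool)) (hLPnd : LP.Nodup) (hLPch : LP.IsChain Γ.Adj)
    (hLPhead : LP.head? = some (0, σ)) (hLPlast : LP.getLast? = some (β, σ))
    (hLPmem : ∀ v, v ∈ LP ↔ v.1 ∈ W)
    (M : List (ZMod m × Bool)) (pp pp' : ZMod m) (hMnd : M.Nodup) (hMch : M.IsChain Γ.Adj)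
    (hMhead : M.head? = some (pp, !σ)) (hMlast : M.getLast? = some (pp', !σ))
    (hMadj : Γ.Adj (pp, !σ) (pp', !σ))
    (hMmem : ∀ v, v ∈ M ↔ v.1 ∈ W) :
    ∃ a, ∃ pw : Γ.Walk a a, pw.IsHamiltonianCycle := by
  classical
  have hβW : β ∈ W := (hLPmem _).1 (List.mem_of_getLast? hLPlast)
  have lenlem : ∀ L : List (ZMod m × Bool), L.Nodup → (∀ v, v ∈ L) →
      L.length = Fintype.card (ZMod m × Bool) := by
    intro L hnd hcov
    rw [← List.toFinset_card_of_nodup hnd]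
    have : L.toFinset = Finset.univ := Finset.eq_univ_iff_forall.2 (by simpa using hcov)
    rw [this, Finset.card_univ]
  by_cases hd1 : d = 1
  · subst hd1
    have hWall : ∀ i : ZMod m, i ∈ W := by
      intro i
      obtain ⟨j, ⟨hj, hjW⟩, _⟩ := hpart i
      interval_cases j
      simpa using hjW
    have hcov : ∀ v, v ∈ M := fun v => (hMmem v).2 (hWall v.1)
    exact ham_of_list M hMnd hMch hcov hMhead hMlast hMadj.symm
      (by rw [lenlem M hMnd hcov]; exact hcard)
  · have hd2 : 2 ≤ d := by
      obtain ⟨j, ⟨hj, _⟩, _⟩ := hpart 0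
      omega
    obtain ⟨e, rfl⟩ : ∃ e, d = e + 2 := ⟨d - 2, by omega⟩
    have cntW : ∀ (L : List (ZMod m × Bool)), L.Nodup → (∀ v, v ∈ L ↔ v.1 ∈ W) → ∀ ε : Bool,
        L.countP (fun v => v.2 == ε) =
          (Finset.univ.filter (fun i : ZMod m => i ∈ W)).card := by
      intro L hnd hm ε
      rw [List.countP_eq_length_filter, ← List.toFinset_card_of_nodup (hnd.filter _)]
      refine Finset.card_bij' (fun v _ => v.1) (fun i _ => (i, ε)) ?hi ?hj ?li ?ri
      case hi =>
        intro v hv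
        rw [List.mem_toFinset, List.mem_filter] at hv
        simp only [Finset.mem_filter, Finset.mem_univ, true_and]
        exact (hm v).1 hv.1
      case hj =>
        intro i hi
        simp only [Finset.mem_filter, Finset.mem_univ, true_and] at hi
        rw [List.mem_toFinset, List.mem_filter]
        exact ⟨(hm _).2 hi, by simp⟩
      case li =>
        intro v hv
        rw [List.mem_toFinset, List.mem_filter] at hv
        have hv2 : v.2 = ε := by simpa using hv.2
        exact Prod.ext rfl hv2.symm
      case ri =>
        intro i _
        rfl
    obtain ⟨A, qv, qv', B, hLPdec, hq, hq'⟩ :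
        ∃ A qv qv' B, LP = A ++ qv :: qv' :: B ∧ qv.2 = !σ ∧ qv'.2 = !σ := by
      rcases find_pair (fun v : ZMod m × Bool => v.2 = !σ) LP with hchain |
        ⟨A, qv, qv', B, hdec, hq, hq'⟩
      · exfalso
        set f : ZMod m × Bool → Bool := fun v => v.2 == !σ with hf
        have hbc : (LP.map f).IsChain (fun x y => ¬(x = true ∧ y = true)) := by
          rw [List.isChain_map]
          refine hchain.imp ?_
          intro a b hab hcon
          exact hab ⟨by simpa [hf] using hcon.1, by simpa [hf] using hcon.2⟩
        have hh : (LP.map f).head? = some false := by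
          rw [List.head?_map, hLPhead]
          simp [hf]
        have hl : (LP.map f).getLast? = some false := by
          rw [List.getLast?_map, hLPlast]
          simp [hf]
        have hlt := boolcount_strict (LP.map f) hbc hh hl
        have e1 : (LP.map f).count true = LP.countP (fun v => v.2 == !σ) := by
          simp only [List.count, List.countP_map]
          apply List.countP_congr
          intro v _
          simp [hf]
        have e2 : (LP.map f).count false = LP.countP (fun v => v.2 == σ) := by
          simp only [List.count, List.countP_map]
          apply List.countP_congr
          intro v _
          cases hv2 : v.2 <;> cases σ <;> simp [hf, Function.comp, hv2]
        rw [e1, e2, cntW LP hLPnd hLPmem, cntW LP hLPnd hLPmem] at hlt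
        omega
      · exact ⟨A, qv, qv', B, hdec, hq, hq'⟩
    obtain ⟨q, rfl⟩ : ∃ q, qv = (q, !σ) := ⟨qv.1, by rw [← hq]⟩
    obtain ⟨q', rfl⟩ : ∃ q', qv' = (q', !σ) := ⟨qv'.1, by rw [← hq']⟩
    have hA : A ≠ [] := by
      intro h
      rw [h, List.nil_append] at hLPdec
      rw [hLPdec] at hLPhead
      simp only [List.head?_cons, Option.some.injEq] at hLPhead
      have := congrArg Prod.snd hLPhead
      simp at this
    have hB : B ≠ [] := by
      intro h
      rw [h] at hLPdec
      rw [hLPdec, List.getLast?_append_cons, List.getLast?_cons_cons] at hLPlast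
      simp only [List.getLast?_singleton, Option.some.injEq] at hLPlast
      have := congrArg Prod.snd hLPlast
      simp at this
    have hqq'adj : Γ.Adj (q, !σ) (q', !σ) := by
      have hx := hLPch
      rw [hLPdec] at hx
      have h2 := (List.isChain_append.1 hx).2.1
      exact ((List.isChain_cons_cons).1 h2).1
    have hqq' : q' - q = β ∨ q - q' = β := hinner q q' hqq'adj
    have hqW : q ∈ W := by
      have : (q, !σ) ∈ LP := by rw [hLPdec]; simp
      exact (hLPmem _).1 this
    have hAhead : A.head? = some (0, σ) := by
      rw [hLPdec, List.head?_append_of_ne_nil A hA] at hLPhead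
      exact hLPhead
    have hconsB : ((q', !σ) :: B).getLast? = B.getLast? := by
      have e0 : (q', !σ) :: B = [(q', !σ)] ++ B := rfl
      rw [e0, List.getLast?_append_of_ne_nil _ hB]
    have hBlast : B.getLast? = some (β, σ) := by
      rw [hLPdec, List.getLast?_append_cons, List.getLast?_cons_cons, hconsB] at hLPlast
      exact hLPlast
    have INV : ∀ k : ℕ, k + 1 ≤ e + 2 → ∃ (Q : List (ZMod m × Bool)) (h h' : ZMod m),
        Q.Nodup ∧ Q.IsChain Γ.Adj ∧ Q.head? = some (h, σ) ∧ Q.getLast? = some (h', σ) ∧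
        (h' - h = β ∨ h - h' = β) ∧ (h - (k : ZMod m) * γ ∈ W) ∧
        (∀ v, v ∈ Q ↔ ∃ j : ℕ, j ≤ k ∧ v.1 - (j : ZMod m) * γ ∈ W) := by
      intro k
      induction k with
      | zero =>
          intro _
          refine ⟨LP, 0, β, hLPnd, hLPch, hLPhead, hLPlast, Or.inl (by ring),
            by simpa using W.zero_mem, ?_⟩
          intro v
          rw [hLPmem v]
          constructor
          · intro hv; exact ⟨0, le_refl 0, by simpa using hv⟩
          · rintro ⟨j, hj, hv⟩
            interval_cases j
            simpa using hv
      | succ k ih =>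
          intro hk
          obtain ⟨Q₀, h₀, h'₀, hQnd₀, hQch₀, hQh₀, hQl₀, hdiff₀, hcos₀, hQmem₀⟩ := ih (by omega)
          obtain ⟨Q, h, h', hQnd, hQch, hQh, hQl, hcos, hQmem, halign⟩ :
              ∃ (Q : List (ZMod m × Bool)) (h h' : ZMod m),
                Q.Nodup ∧ Q.IsChain Γ.Adj ∧ Q.head? = some (h, σ) ∧ Q.getLast? = some (h', σ) ∧
                (h - (k : ZMod m) * γ ∈ W) ∧
                (∀ v, v ∈ Q ↔ ∃ j : ℕ, j ≤ k ∧ v.1 - (j : ZMod m) * γ ∈ W) ∧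
                q' - q = h' - h := by
            have hrevch : Q₀.reverse.IsChain Γ.Adj := by
              rw [List.isChain_reverse]
              exact hQch₀.imp (fun {a b} hab => hab.symm)
            have hcos' : h'₀ - (k : ZMod m) * γ ∈ W := by
              have h1 : h'₀ - (k : ZMod m) * γ = (h₀ - (k : ZMod m) * γ) + (h'₀ - h₀) := by ring
              rcases hdiff₀ with hb | hb
              · rw [h1, hb]; exact W.add_mem hcos₀ hβW
              · have h2 : h'₀ - h₀ = -β := by rw [← hb]; ring
                rw [h1, h2]; exact W.add_mem hcos₀ (W.neg_mem hβW)
            rcases hqq' with hr | hr <;> rcases hdiff₀ with hs | hs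
            · exact ⟨Q₀, h₀, h'₀, hQnd₀, hQch₀, hQh₀, hQl₀, hcos₀, hQmem₀,
                by linear_combination hr - hs⟩
            · refine ⟨Q₀.reverse, h'₀, h₀, (List.nodup_reverse.2 hQnd₀), hrevch, ?_, ?_, hcos', ?_, ?_⟩
              · rw [List.head?_reverse, hQl₀]
              · rw [List.getLast?_reverse, hQh₀]
              · intro v; rw [List.mem_reverse]; exact hQmem₀ v
              · linear_combination hr - hs
            · refine ⟨Q₀.reverse, h'₀, h₀, (List.nodup_reverse.2 hQnd₀), hrevch, ?_, ?_, hcos', ?_, ?_⟩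
              · rw [List.head?_reverse, hQl₀]
              · rw [List.getLast?_reverse, hQh₀]
              · intro v; rw [List.mem_reverse]; exact hQmem₀ v
              · linear_combination hs - hr
            · exact ⟨Q₀, h₀, h'₀, hQnd₀, hQch₀, hQh₀, hQl₀, hcos₀, hQmem₀,
                by linear_combination hs - hr⟩
          set t : ZMod m := h + γ - q with ht
          set Sh : ZMod m × Bool → ZMod m × Bool := fun v => (v.1 + t, v.2) with hSh
          have hShinj : Function.Injective Sh := by
            intro x y hxy
            have h1 := congrArg Prod.fst hxy
            have h2 := congrArg Prod.snd hxy
            simp only [hSh] at h1 h2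
            exact Prod.ext (by linear_combination h1) h2
          have htcos : t - ((k+1 : ℕ) : ZMod m) * γ ∈ W := by
            have he : t - ((k+1 : ℕ) : ZMod m) * γ = (h - (k : ZMod m) * γ) - q := by
              push_cast
              rw [ht]; ring
            rw [he]
            exact W.sub_mem hcos hqW
          have hLPs : LP.map Sh = A.map Sh ++ (q + t, !σ) :: (q' + t, !σ) :: B.map Sh := by
            rw [hLPdec]; simp [hSh]
          have hLPsch : (LP.map Sh).IsChain Γ.Adj := by
            rw [List.isChain_map]
            exact hLPch.imp (fun {a b} hab => hsh t _ _ hab)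
          have hLPsmem : ∀ v : ZMod m × Bool,
              v ∈ LP.map Sh ↔ v.1 - ((k+1 : ℕ) : ZMod m) * γ ∈ W := by
            intro v
            constructor
            · rintro hv
              rw [List.mem_map] at hv
              obtain ⟨w, hw, rfl⟩ := hv
              have hwW : w.1 ∈ W := (hLPmem w).1 hw
              have heq : (Sh w).1 - ((k+1 : ℕ) : ZMod m) * γ
                  = w.1 + (t - ((k+1 : ℕ) : ZMod m) * γ) := by
                simp only [hSh]; ring
              rw [heq]
              exact W.add_mem hwW htcos
            · intro hv
              rw [List.mem_map]
              refine ⟨(v.1 - t, v.2), ?_, by simp [hSh]⟩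
              rw [hLPmem]
              have heq : v.1 - t
                  = (v.1 - ((k+1 : ℕ) : ZMod m) * γ) - (t - ((k+1 : ℕ) : ZMod m) * γ) := by ring
              rw [heq]
              exact W.sub_mem hv htcos
          set QQ : List (ZMod m × Bool) :=
            A.map Sh ++ (q + t, !σ) :: (Q ++ (q' + t, !σ) :: B.map Sh) with hQQ
          have hperm : QQ ~ LP.map Sh ++ Q := by
            rw [hLPs, hQQ]
            have e2 : (A.map Sh ++ (q + t, !σ) :: (q' + t, !σ) :: B.map Sh) ++ Q =
                A.map Sh ++ (q + t, !σ) :: ((q' + t, !σ) :: B.map Sh ++ Q) := by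
              simp [List.append_assoc]
            rw [e2]
            exact List.Perm.append_left _ (List.Perm.cons _ List.perm_append_comm)
          have hdisj : ∀ v, v ∈ LP.map Sh → v ∈ Q → False := by
            intro v hv1 hv2
            have h1 := (hLPsmem v).1 hv1
            obtain ⟨j, hj, hjW⟩ := (hQmem v).1 hv2
            obtain ⟨jj, _, huniq⟩ := hpart v.1
            have e1 : (k+1 : ℕ) = jj := huniq (k+1) ⟨by omega, by exact_mod_cast h1⟩
            have e2 : j = jj := huniq j ⟨by omega, hjW⟩
            omega
          have hQQnd : QQ.Nodup := by
            rw [hperm.nodup_iff, List.nodup_append]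
            exact ⟨hLPnd.map hShinj, hQnd, fun v hv1 w hw hvw => hdisj v hv1 (by rw [hvw]; exact hw)⟩
          have hQQmem : ∀ v : ZMod m × Bool,
              v ∈ QQ ↔ ∃ j : ℕ, j ≤ k + 1 ∧ v.1 - (j : ZMod m) * γ ∈ W := by
            intro v
            rw [hperm.mem_iff, List.mem_append]
            constructor
            · rintro (hv | hv)
              · exact ⟨k+1, le_refl _, by exact_mod_cast (hLPsmem v).1 hv⟩
              · obtain ⟨j, hj, hjW⟩ := (hQmem v).1 hv
                exact ⟨j, by omega, hjW⟩
            · rintro ⟨j, hj, hjW⟩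
              rcases Nat.lt_or_ge j (k+1) with hlt | hge
              · exact Or.inr ((hQmem v).2 ⟨j, by omega, hjW⟩)
              · have : j = k + 1 := by omega
                subst this
                exact Or.inl ((hLPsmem v).2 (by exact_mod_cast hjW))
          have hAmapne : A.map Sh ≠ [] := by simpa using hA
          have hQQhead : QQ.head? = some (t, σ) := by
            rw [hQQ, List.head?_append_of_ne_nil _ hAmapne, List.head?_map, hAhead]
            simp [hSh]
          have hQne : Q ≠ [] := by
            intro h0; rw [h0] at hQh; simp at hQh
          have hBmapne : B.map Sh ≠ [] := by simpa using hB
          have hQQe3 : QQ = (A.map Sh ++ (q + t, !σ) :: Q) ++ ((q' + t, !σ) :: B.map Sh) := by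
            rw [hQQ]; simp [List.append_assoc]
          have hQQlast : QQ.getLast? = some (β + t, σ) := by
            rw [hQQe3, List.getLast?_append_cons]
            have : ((q' + t, !σ) :: B.map Sh) = [(q' + t, !σ)] ++ B.map Sh := rfl
            rw [this, List.getLast?_append_of_ne_nil _ hBmapne, List.getLast?_map, hBlast]
            simp [hSh]
          have hqt : q + t = h + γ := by rw [ht]; ring
          have hq't : q' + t = h' + γ := by rw [ht]; linear_combination halign
          have hchsub : ((q + t, !σ) :: (q' + t, !σ) :: B.map Sh).IsChain Γ.Adj := by
            have hx := hLPsch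
            rw [hLPs] at hx
            exact (List.isChain_append.1 hx).2.1
          have hQQch : QQ.IsChain Γ.Adj := by
            rw [hQQ]
            apply List.isChain_append.2
            refine ⟨?_, ?_, ?_⟩
            · have hx := hLPsch
              rw [hLPs] at hx
              exact (List.isChain_append.1 hx).1
            · apply List.isChain_cons.2
              constructor
              · intro y hy
                rw [List.head?_append_of_ne_nil _ hQne, hQh] at hy
                simp only [Option.mem_def, Option.some.injEq] at hy
                subst hy
                rw [hqt]
                exact (hspoke h).symm
              · apply List.isChain_append.2
                refine ⟨hQch, ((List.isChain_cons_cons).1 hchsub).2, ?_⟩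
                intro x hx y hy
                rw [hQl] at hx
                simp only [Option.mem_def, Option.some.injEq] at hx
                subst hx
                simp only [List.head?_cons, Option.mem_def, Option.some.injEq] at hy
                subst hy
                rw [hq't]
                exact hspoke h'
            · intro x hx y hy
              have hx2 := hLPsch
              rw [hLPs] at hx2
              have hbd := (List.isChain_append.1 hx2).2.2
              simp only [List.head?_cons, Option.mem_def, Option.some.injEq] at hy
              subst hy
              exact hbd x hx _ (by simp)
          refine ⟨QQ, t, β + t, hQQnd, hQQch, hQQhead, hQQlast, Or.inl (by ring), ?_, hQQmem⟩
          exact_mod_cast htcos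
    -- final assembly
    obtain ⟨Q, h, h', hQnd, hQch, hQh, hQl, hdiff, hcos, hQmem⟩ := INV e (by omega)
    have hMdiffs : pp' - pp = β ∨ pp - pp' = β := hinner pp pp' hMadj
    obtain ⟨Mf, pf, pf', hMnd', hMch', hMh', hMl', hMadj', hMmem', halignM⟩ :
        ∃ (Mf : List (ZMod m × Bool)) (pf pf' : ZMod m),
          Mf.Nodup ∧ Mf.IsChain Γ.Adj ∧ Mf.head? = some (pf, !σ) ∧
          Mf.getLast? = some (pf', !σ) ∧ Γ.Adj (pf, !σ) (pf', !σ) ∧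
          (∀ v, v ∈ Mf ↔ v.1 ∈ W) ∧ pf' - pf = h' - h := by
      have hrevch : M.reverse.IsChain Γ.Adj := by
        rw [List.isChain_reverse]
        exact hMch.imp (fun {a b} hab => hab.symm)
      rcases hMdiffs with hr | hr <;> rcases hdiff with hs | hs
      · exact ⟨M, pp, pp', hMnd, hMch, hMhead, hMlast, hMadj, hMmem,
          by linear_combination hr - hs⟩
      · refine ⟨M.reverse, pp', pp, (List.nodup_reverse.2 hMnd), hrevch, ?_, ?_, hMadj.symm, ?_, ?_⟩
        · rw [List.head?_reverse, hMlast]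
        · rw [List.getLast?_reverse, hMhead]
        · intro v; rw [List.mem_reverse]; exact hMmem v
        · linear_combination hs - hr
      · refine ⟨M.reverse, pp', pp, (List.nodup_reverse.2 hMnd), hrevch, ?_, ?_, hMadj.symm, ?_, ?_⟩
        · rw [List.head?_reverse, hMlast]
        · rw [List.getLast?_reverse, hMhead]
        · intro v; rw [List.mem_reverse]; exact hMmem v
        · linear_combination hr - hs
      · exact ⟨M, pp, pp', hMnd, hMch, hMhead, hMlast, hMadj, hMmem,
          by linear_combination hs - hr⟩
    have hpfW : pf ∈ W := by
      have : (pf, !σ) ∈ Mf := List.mem_of_mem_head? (by rw [hMh']; rfl)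
      exact (hMmem' _).1 this
    set t : ZMod m := h + γ - pf with ht
    set Sh : ZMod m × Bool → ZMod m × Bool := fun v => (v.1 + t, v.2) with hSh
    have hShinj : Function.Injective Sh := by
      intro x y hxy
      have h1 := congrArg Prod.fst hxy
      have h2 := congrArg Prod.snd hxy
      simp only [hSh] at h1 h2
      exact Prod.ext (by linear_combination h1) h2
    have htcos : t - ((e+1 : ℕ) : ZMod m) * γ ∈ W := by
      have he : t - ((e+1 : ℕ) : ZMod m) * γ = (h - (e : ZMod m) * γ) - pf := by
        push_cast
        rw [ht]; ring
      rw [he]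
      exact W.sub_mem hcos hpfW
    have hMsmem : ∀ v : ZMod m × Bool,
        v ∈ Mf.map Sh ↔ v.1 - ((e+1 : ℕ) : ZMod m) * γ ∈ W := by
      intro v
      constructor
      · rintro hv
        rw [List.mem_map] at hv
        obtain ⟨w, hw, rfl⟩ := hv
        have hwW : w.1 ∈ W := (hMmem' w).1 hw
        have heq : (Sh w).1 - ((e+1 : ℕ) : ZMod m) * γ
            = w.1 + (t - ((e+1 : ℕ) : ZMod m) * γ) := by
          simp only [hSh]; ring
        rw [heq]
        exact W.add_mem hwW htcos
      · intro hv
        rw [List.mem_map]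
        refine ⟨(v.1 - t, v.2), ?_, by simp [hSh]⟩
        rw [hMmem']
        have heq : v.1 - t
            = (v.1 - ((e+1 : ℕ) : ZMod m) * γ) - (t - ((e+1 : ℕ) : ZMod m) * γ) := by ring
        rw [heq]
        exact W.sub_mem hv htcos
    set L : List (ZMod m × Bool) := Q ++ (Mf.map Sh).reverse with hLdef
    have hQne : Q ≠ [] := by
      intro h0; rw [h0] at hQh; simp at hQh
    have hMfne : Mf ≠ [] := by
      intro h0; rw [h0] at hMh'; simp at hMh'
    have hMsne : (Mf.map Sh).reverse ≠ [] := by simpa using hMfne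
    have hLnd : L.Nodup := by
      rw [hLdef, List.nodup_append]
      refine ⟨hQnd, (List.nodup_reverse.2 (hMnd'.map hShinj)), ?_⟩
      intro v hv1 v' hv2 hvv
      subst hvv
      rw [List.mem_reverse] at hv2
      have h1 := (hMsmem v).1 hv2
      obtain ⟨j, hj, hjW⟩ := (hQmem v).1 hv1
      obtain ⟨jj, _, huniq⟩ := hpart v.1
      have e1 : (e+1 : ℕ) = jj := huniq (e+1) ⟨by omega, by exact_mod_cast h1⟩
      have e2 : j = jj := huniq j ⟨by omega, hjW⟩
      omega
    have hLcov : ∀ v, v ∈ L := by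
      intro v
      rw [hLdef, List.mem_append, List.mem_reverse]
      obtain ⟨j, ⟨hj, hjW⟩, _⟩ := hpart v.1
      rcases Nat.lt_or_ge j (e+1) with hlt | hge
      · exact Or.inl ((hQmem v).2 ⟨j, by omega, hjW⟩)
      · have : j = e + 1 := by omega
        subst this
        exact Or.inr ((hMsmem v).2 (by exact_mod_cast hjW))
    have hpft : pf + t = h + γ := by rw [ht]; ring
    have hpf't : pf' + t = h' + γ := by rw [ht]; linear_combination halignM
    have hLch : L.IsChain Γ.Adj := by
      rw [hLdef]
      apply List.isChain_append.2
      refine ⟨hQch, ?_, ?_⟩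
      · rw [List.isChain_reverse]
        rw [List.isChain_map]
        exact hMch'.imp (fun {a b} hab => (hsh t _ _ hab).symm)
      · intro x hx y hy
        rw [hQl] at hx
        simp only [Option.mem_def, Option.some.injEq] at hx
        subst hx
        rw [List.head?_reverse, List.getLast?_map, hMl'] at hy
        simp only [Option.mem_def, Option.map_some, Option.some.injEq] at hy
        subst hy
        show Γ.Adj (h', σ) (Sh (pf', !σ))
        have : Sh (pf', !σ) = (h' + γ, !σ) := by simp only [hSh]; rw [hpf't]
        rw [this]
        exact hspoke h'
    have hLhead : L.head? = some (h, σ) := by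
      rw [hLdef, List.head?_append_of_ne_nil _ hQne, hQh]
    have hLlast : L.getLast? = some (h + γ, !σ) := by
      rw [hLdef, List.getLast?_append_of_ne_nil _ hMsne, List.getLast?_reverse,
        List.head?_map, hMh']
      simp only [Option.map_some, Option.some.injEq]
      simp only [hSh]
      rw [hpft]
    have hadj : Γ.Adj (h + γ, !σ) (h, σ) := (hspoke h).symm
    exact ham_of_list L hLnd hLch hLcov hLhead hLlast hadj
      (by rw [lenlem L hLnd hLcov]; exact hcard)

end Assemble

section BicircLemmas

open SimpleGraph

variable {m : ℕ} [NeZero m]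

lemma bic_shift (R S T : Finset (ZMod m)) (t : ZMod m) (x y : ZMod m × Bool)
    (h : (bicirculant m R S T).Adj x y) :
    (bicirculant m R S T).Adj (x.1 + t, x.2) (y.1 + t, y.2) := by
  rw [bicirculant, SimpleGraph.fromRel_adj] at h ⊢
  obtain ⟨hne, hrel⟩ := h
  refine ⟨?_, ?_⟩
  · intro he
    apply hne
    rw [Prod.mk.injEq] at he
    exact Prod.ext (by linear_combination he.1) he.2
  · simpa only [add_sub_add_right_eq_sub] using hrel

lemma bic_spoke (R S T : Finset (ZMod m)) {s : ZMod m} (hs : s ∈ S) (i : ZMod m) :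
    (bicirculant m R S T).Adj (i, false) (i + s, true) := by
  rw [bicirculant, SimpleGraph.fromRel_adj]
  exact ⟨by simp, Or.inl (Or.inr (Or.inr ⟨rfl, rfl, by simpa using hs⟩))⟩

lemma bic_inner {R S : Finset (ZMod m)} {b : ZMod m} {x y : ZMod m}
    (h : (bicirculant m R S {b, -b}).Adj (x, true) (y, true)) :
    y - x = b ∨ x - y = b := by
  rw [bicirculant, SimpleGraph.fromRel_adj] at h
  obtain ⟨-, hrel⟩ := h
  rcases hrel with (⟨h1, -, -⟩ | ⟨-, -, hm⟩ | ⟨h1, -, -⟩) | (⟨h1, -, -⟩ | ⟨-, -, hm⟩ | ⟨h1, -, -⟩)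
  · simp at h1
  · simp only [Finset.mem_insert, Finset.mem_singleton] at hm
    rcases hm with hm | hm
    · exact Or.inl hm
    · exact Or.inr (by linear_combination -hm)
  · simp at h1
  · simp at h1
  · simp only [Finset.mem_insert, Finset.mem_singleton] at hm
    rcases hm with hm | hm
    · exact Or.inr hm
    · exact Or.inl (by linear_combination -hm)
  · simp at h1

lemma bic_outer {S T : Finset (ZMod m)} {a : ZMod m} {x y : ZMod m}
    (h : (bicirculant m {a, -a} S T).Adj (x, false) (y, false)) :
    y - x = a ∨ x - y = a := by
  rw [bicirculant, SimpleGraph.fromRel_adj] at h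
  obtain ⟨-, hrel⟩ := h
  rcases hrel with (⟨-, -, hm⟩ | ⟨h1, -, -⟩ | ⟨-, h1, -⟩) | (⟨-, -, hm⟩ | ⟨h1, -, -⟩ | ⟨-, h1, -⟩)
  · simp only [Finset.mem_insert, Finset.mem_singleton] at hm
    rcases hm with hm | hm
    · exact Or.inl hm
    · exact Or.inr (by linear_combination -hm)
  · simp at h1
  · simp at h1
  · simp only [Finset.mem_insert, Finset.mem_singleton] at hm
    rcases hm with hm | hm
    · exact Or.inr hm
    · exact Or.inl (by linear_combination -hm)
  · simp at h1
  · simp at h1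

lemma bic_mono {R S S' T : Finset (ZMod m)} (hss : S ⊆ S') {x y : ZMod m × Bool}
    (h : (bicirculant m R S T).Adj x y) : (bicirculant m R S' T).Adj x y := by
  rw [bicirculant, SimpleGraph.fromRel_adj] at h ⊢
  obtain ⟨hne, hrel⟩ := h
  refine ⟨hne, ?_⟩
  rcases hrel with (h | h | h) | (h | h | h)
  · exact Or.inl (Or.inl h)
  · exact Or.inl (Or.inr (Or.inl h))
  · exact Or.inl (Or.inr (Or.inr ⟨h.1, h.2.1, hss h.2.2⟩))
  · exact Or.inr (Or.inl h)
  · exact Or.inr (Or.inr (Or.inl h))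
  · exact Or.inr (Or.inr (Or.inr ⟨h.1, h.2.1, hss h.2.2⟩))

lemma bic_adj_diff {a b : ZMod m} {S : Finset (ZMod m)} {x y : ZMod m × Bool}
    (h : (bicirculant m {a, -a} S {b, -b}).Adj x y) :
    y.1 - x.1 ∈ AddSubgroup.closure (insert a (insert b (S : Set (ZMod m)))) := by
  set W := AddSubgroup.closure (insert a (insert b (S : Set (ZMod m)))) with hW
  have ha : a ∈ W := AddSubgroup.subset_closure (by simp)
  have hb : b ∈ W := AddSubgroup.subset_closure (by simp)
  have hS : ∀ s ∈ S, s ∈ W := fun s hs => AddSubgroup.subset_closure (by simp [hs])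
  have hpm : ∀ z : ZMod m, z ∈ W → ∀ w : ZMod m, (w = z ∨ w = -z) → w ∈ W := by
    rintro z hz w (rfl | rfl)
    · exact hz
    · exact W.neg_mem hz
  have hrevme : ∀ z : ZMod m, (x.1 - y.1 = z) → z ∈ W → y.1 - x.1 ∈ W := by
    intro z hz hzW
    have : y.1 - x.1 = -z := by linear_combination -hz
    rw [this]; exact W.neg_mem hzW
  rw [bicirculant, SimpleGraph.fromRel_adj] at h
  obtain ⟨-, hrel⟩ := h
  rcases hrel with (⟨-, -, hm⟩ | ⟨-, -, hm⟩ | ⟨-, -, hm⟩) | (⟨-, -, hm⟩ | ⟨-, -, hm⟩ | ⟨-, -, hm⟩)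
  · simp only [Finset.mem_insert, Finset.mem_singleton] at hm
    exact hpm a ha _ hm
  · simp only [Finset.mem_insert, Finset.mem_singleton] at hm
    exact hpm b hb _ hm
  · exact hS _ hm
  · simp only [Finset.mem_insert, Finset.mem_singleton] at hm
    rcases hm with hm | hm
    · exact hrevme a hm ha
    · exact hrevme (-a) hm (W.neg_mem ha)
  · simp only [Finset.mem_insert, Finset.mem_singleton] at hm
    rcases hm with hm | hm
    · exact hrevme b hm hb
    · exact hrevme (-b) hm (W.neg_mem hb)
  · exact hrevme _ rfl (hS _ hm)

lemma bic_walk_diff (a b : ZMod m) (S : Finset (ZMod m)) {x y : ZMod m × Bool}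
    (w : (bicirculant m {a, -a} S {b, -b}).Walk x y) :
    y.1 - x.1 ∈ AddSubgroup.closure (insert a (insert b (S : Set (ZMod m)))) := by
  induction w with
  | nil => simpa using (AddSubgroup.closure _).zero_mem
  | @cons u v z hadj w ih =>
      have h1 := bic_adj_diff hadj
      have he : z.1 - u.1 = (v.1 - u.1) + (z.1 - v.1) := by ring
      rw [he]
      exact (AddSubgroup.closure _).add_mem h1 ih

lemma bic_reach (a b : ZMod m) (S' : Finset (ZMod m)) (ha : a ≠ 0) (hb : b ≠ 0)
    (hS0 : (0 : ZMod m) ∈ S') {i : ZMod m}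
    (hi : i ∈ AddSubgroup.closure (insert a (insert b (S' : Set (ZMod m))))) (ε : Bool) :
    (bicirculant m {a, -a} S' {b, -b}).Reachable ((0 : ZMod m), false) (i, ε) := by
  set G' := bicirculant m {a, -a} S' {b, -b} with hG'
  have hspoke0 : ∀ j : ZMod m, G'.Adj (j, false) (j, true) := by
    intro j
    have := bic_spoke {a, -a} S' {b, -b} hS0 j
    simpa using this
  have hshift : ∀ (t : ZMod m) (x y : ZMod m × Bool), G'.Reachable x y →
      G'.Reachable (x.1 + t, x.2) (y.1 + t, y.2) := by
    intro t x y hxy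
    obtain ⟨w⟩ := hxy
    exact ⟨w.map ⟨fun v => (v.1 + t, v.2), fun {u v} h => bic_shift _ _ _ t u v h⟩⟩
  set P : AddSubgroup (ZMod m) :=
    { carrier := {j : ZMod m | G'.Reachable (0, false) (j, false)}
      zero_mem' := Reachable.refl _
      add_mem' := by
        intro u v hu hv
        have h2 := hshift u _ _ hv
        simp only [zero_add] at h2
        have h3 := hu.trans h2
        rwa [add_comm v u] at h3
      neg_mem' := by
        intro u hu
        have h2 := hshift (-u) _ _ hu
        simp only [zero_add, add_neg_cancel] at h2
        exact h2.symm } with hP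
  have hgen : insert a (insert b (S' : Set (ZMod m))) ⊆ (P : Set (ZMod m)) := by
    rintro z hz
    simp only [Set.mem_insert_iff] at hz
    rcases hz with rfl | rfl | hz
    · refine SimpleGraph.Adj.reachable ?_
      rw [hG', bicirculant, SimpleGraph.fromRel_adj]
      refine ⟨?_, Or.inl (Or.inl ⟨rfl, rfl, by simp⟩)⟩
      intro hcon
      rw [Prod.mk.injEq] at hcon
      exact ha hcon.1.symm
    · have h1 : G'.Adj (0, true) (z, true) := by
        rw [hG', bicirculant, SimpleGraph.fromRel_adj]
        refine ⟨?_, Or.inl (Or.inr (Or.inl ⟨rfl, rfl, by simp⟩))⟩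
        intro hcon
        rw [Prod.mk.injEq] at hcon
        exact hb hcon.1.symm
      exact ((hspoke0 0).reachable.trans h1.reachable).trans (hspoke0 z).reachable.symm
    · by_cases hz0 : z = 0
      · subst hz0; exact Reachable.refl _
      · have h1 : G'.Adj (0, false) (z, true) := by
          have := bic_spoke {a, -a} S' {b, -b} hz 0
          simpa using this
        exact h1.reachable.trans (hspoke0 z).reachable.symm
  have hiP : i ∈ P := (AddSubgroup.closure_le P).2 hgen hi
  cases ε with
  | false => exact hiP
  | true => exact Reachable.trans hiP (hspoke0 i).reachable

lemma Kchar (a b : ZMod m) (S' : Finset (ZMod m)) (ha : a ≠ 0) (hb : b ≠ 0)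
    (hS0 : (0 : ZMod m) ∈ S') (v : ZMod m × Bool) :
    v ∈ ((bicirculant m {a, -a} S' {b, -b}).connectedComponentMk ((0 : ZMod m), false)).supp
      ↔ v.1 ∈ AddSubgroup.closure (insert a (insert b (S' : Set (ZMod m)))) := by
  rw [SimpleGraph.ConnectedComponent.mem_supp_iff, SimpleGraph.ConnectedComponent.eq]
  constructor
  · intro h
    obtain ⟨w⟩ := h
    have h1 := bic_walk_diff a b S' w
    have h2 : v.1 = -(((0 : ZMod m), false).1 - v.1) := by simp
    rw [h2]
    exact (AddSubgroup.closure _).neg_mem h1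
  · intro h
    have h1 := bic_reach a b S' ha hb hS0 h v.2
    exact Reachable.symm (by simpa using h1)

lemma part_exists (W : AddSubgroup (ZMod m)) (c γ : ZMod m) (hγ : γ = c ∨ γ = -c)
    (htop : ∀ i : ZMod m, i ∈ AddSubgroup.closure (insert c (W : Set (ZMod m)))) :
    ∃ d : ℕ, ∀ i : ZMod m, ∃! j : ℕ, j < d ∧ i - (j : ZMod m) * γ ∈ W := by
  classical
  haveI : Finite (ZMod m ⧸ W) := Finite.of_surjective _ (QuotientAddGroup.mk'_surjective W)
  set ϕ := QuotientAddGroup.mk' W with hϕ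
  set g : ZMod m ⧸ W := ϕ γ with hg
  set d := addOrderOf g with hd
  have hdpos : 0 < d := addOrderOf_pos g
  have key : ∀ (j : ℕ) (i : ZMod m), i - (j : ZMod m) * γ ∈ W ↔ ϕ i = j • g := by
    intro j i
    have e2 : (j : ZMod m) * γ = j • γ := (nsmul_eq_mul (j : ℕ) γ).symm
    rw [← QuotientAddGroup.eq_zero_iff (i - (j : ZMod m) * γ)]
    have e3 : ((i - (j : ZMod m) * γ : ZMod m) : ZMod m ⧸ W) = ϕ i - j • g := by
      rw [e2]
      show ϕ (i - j • γ) = ϕ i - j • g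
      rw [map_sub, map_nsmul]
    rw [e3, sub_eq_zero]
  have hsurj : ∀ x : ZMod m ⧸ W, ∃ j : ℕ, j < d ∧ j • g = x := by
    intro x
    obtain ⟨i, rfl⟩ := QuotientAddGroup.mk'_surjective W x
    have hiz : ϕ i ∈ AddSubgroup.zmultiples g := by
      have hsub : AddSubgroup.closure (insert c (W : Set (ZMod m))) ≤
          (AddSubgroup.zmultiples g).comap ϕ := by
        rw [AddSubgroup.closure_le]
        rintro z hz
        simp only [Set.mem_insert_iff, SetLike.mem_coe] at hz
        rcases hz with rfl | hz
        · simp only [SetLike.mem_coe, AddSubgroup.mem_comap]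
          rcases hγ with rfl | hγ'
          · exact AddSubgroup.mem_zmultiples _
          · have hϕz : ϕ z = -g := by
              rw [hg, hγ', map_neg, neg_neg]
            rw [hϕz]
            exact (AddSubgroup.zmultiples g).neg_mem (AddSubgroup.mem_zmultiples _)
        · simp only [SetLike.mem_coe, AddSubgroup.mem_comap]
          have : ϕ z = 0 := (QuotientAddGroup.eq_zero_iff z).2 hz
          rw [this]
          exact zero_mem _
      exact hsub (htop i)
    obtain ⟨n, hn⟩ := AddSubgroup.mem_zmultiples_iff.1 hiz
    have hne' : (d : ℤ) ≠ 0 := by exact_mod_cast hdpos.ne'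
    have h0 : 0 ≤ n % (d : ℤ) := Int.emod_nonneg n hne'
    have h1 : n % (d : ℤ) < (d : ℤ) := Int.emod_lt_of_pos n (by exact_mod_cast hdpos)
    refine ⟨(n % (d : ℤ)).toNat, by omega, ?_⟩
    have hdvd : ((addOrderOf g : ℕ) : ℤ) ∣ (n - n % (d : ℤ)) := by
      rw [← hd]; exact Int.dvd_self_sub_of_emod_eq rfl
    have hz : (n - n % (d : ℤ)) • g = 0 := addOrderOf_dvd_iff_zsmul_eq_zero.1 hdvd
    have e6 : n • g = (n % (d : ℤ)) • g := by
      have e5 : n • g = (n % (d : ℤ) + (n - n % (d : ℤ))) • g := by norm_num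
      rw [e5, add_zsmul, hz, add_zero]
    calc ((n % (d : ℤ)).toNat) • g = (((n % (d : ℤ)).toNat : ℤ)) • g := (natCast_zsmul _ _).symm
      _ = (n % (d : ℤ)) • g := by rw [Int.toNat_of_nonneg h0]
      _ = n • g := e6.symm
      _ = ϕ i := hn
  refine ⟨d, ?_⟩
  intro i
  obtain ⟨j, hjd, hjg⟩ := hsurj (ϕ i)
  refine ⟨j, ⟨⟨hjd, (key j i).2 hjg.symm⟩, ?_⟩⟩
  rintro j' ⟨hj'd, hj'W⟩
  have h1 : ϕ i = (j' : ℕ) • g := (key j' i).1 hj'W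
  have h2 : (j' : ℕ) • g = j • g := by rw [← h1, hjg]
  have h3 := (nsmul_eq_nsmul_iff_modEq).1 h2
  have h4 : j' % d = j % d := h3
  rw [Nat.mod_eq_of_lt hj'd, Nat.mod_eq_of_lt hjd] at h4
  exact h4

end BicircLemmas


/-- The 2-hooked construction: if the connected component of `u₀` in
`G' = B(m; {a, -a}, S', {b, -b})` has a hamiltonian cycle containing at least one outer edge
and at least one inner edge, and a hamiltonian path from `u₀` to `u_b` or from `v₀` to `v_a`,
then the connected graph `G = B(m; {a, -a}, S' ∪ {c}, {b, -b})` (with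
`gcd(m, S' ∪ {c}) > 1` and `gcd(m, {a} ∪ S' ∪ {b}) > 1`) is hamiltonian. -/
theorem twoHooked_construction
    (m : ℕ) [NeZero m] (a b c : ZMod m) (S' : Finset (ZMod m))
    (ha : a ≠ 0) (hb : b ≠ 0) (hS'0 : (0 : ZMod m) ∈ S') (hc : c ∉ S')
    (hconn : (bicirculant m {a, -a} (insert c S') {b, -b}).Connected)
    (hgcd1 : 1 < gcdSet m (insert c S'))
    (hgcd2 : 1 < gcdSet m (insert a (insert b S')))
    (K : Set (ZMod m × Bool))
    (hK : K = ((bicirculant m {a, -a} S' {b, -b}).connectedComponentMk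
      ((0 : ZMod m), false)).supp)
    (hcycle : ∃ (x : K)
        (p : ((bicirculant m {a, -a} S' {b, -b}).induce K).Walk x x),
      p.IsHamiltonianCycle ∧
      (∃ y z : K, s(y, z) ∈ p.edges ∧ y.1.2 = false ∧ z.1.2 = false) ∧
      (∃ y z : K, s(y, z) ∈ p.edges ∧ y.1.2 = true ∧ z.1.2 = true))
    (hpath :
      (∃ (h₀ : ((0 : ZMod m), false) ∈ K) (h₁ : ((b : ZMod m), false) ∈ K)
          (p : ((bicirculant m {a, -a} S' {b, -b}).induce K).Walk
            ⟨((0 : ZMod m), false), h₀⟩ ⟨(b, false), h₁⟩),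
        p.IsHamiltonian) ∨
      (∃ (h₀ : ((0 : ZMod m), true) ∈ K) (h₁ : ((a : ZMod m), true) ∈ K)
          (p : ((bicirculant m {a, -a} S' {b, -b}).induce K).Walk
            ⟨((0 : ZMod m), true), h₀⟩ ⟨(a, true), h₁⟩),
        p.IsHamiltonian)) :
    (bicirculant m {a, -a} (insert c S') {b, -b}).IsHamiltonian := by
  classical
  intro _
  set G := bicirculant m {a, -a} (insert c S') {b, -b} with hG
  set G' := bicirculant m {a, -a} S' {b, -b} with hG'
  set W := AddSubgroup.closure (insert a (insert b (S' : Set (ZMod m)))) with hW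
  have hm2 : 2 ≤ m := by
    have hm1 : 1 ≤ m := Nat.one_le_iff_ne_zero.2 (NeZero.ne m)
    rcases Nat.lt_or_ge m 2 with h2 | h2
    · interval_cases m
      exact absurd (Subsingleton.elim a 0) ha
    · exact h2
  have hcard : 3 ≤ Fintype.card (ZMod m × Bool) := by
    rw [Fintype.card_prod, ZMod.card, Fintype.card_bool]
    omega
  have hKmem : ∀ v : ZMod m × Bool, v ∈ K ↔ v.1 ∈ W := by
    intro v; rw [hK]; exact Kchar a b S' ha hb hS'0 v
  have haW : a ∈ W := AddSubgroup.subset_closure (by simp)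
  have hbW : b ∈ W := AddSubgroup.subset_closure (by simp)
  have hsW : ∀ s ∈ S', s ∈ W := fun s hs => AddSubgroup.subset_closure (by simp [hs])
  have htop : ∀ i : ZMod m, i ∈ AddSubgroup.closure (insert c (W : Set (ZMod m))) := by
    intro i
    obtain ⟨w⟩ := hconn.preconnected ((0 : ZMod m), false) (i, false)
    have h1 := bic_walk_diff a b (insert c S') w
    have h2 : AddSubgroup.closure
        (insert a (insert b ((insert c S' : Finset (ZMod m)) : Set (ZMod m)))) ≤
        AddSubgroup.closure (insert c (W : Set (ZMod m))) := by
      rw [AddSubgroup.closure_le]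
      intro z hz
      simp only [Finset.coe_insert, Set.mem_insert_iff, Finset.mem_coe] at hz
      rcases hz with rfl | rfl | rfl | hz
      · exact AddSubgroup.subset_closure (Set.mem_insert_of_mem _ haW)
      · exact AddSubgroup.subset_closure (Set.mem_insert_of_mem _ hbW)
      · exact AddSubgroup.subset_closure (Set.mem_insert _ _)
      · exact AddSubgroup.subset_closure (Set.mem_insert_of_mem _ (hsW _ hz))
    have h3 := h2 h1
    simpa using h3
  have hmono : ∀ {x y : ZMod m × Bool}, G'.Adj x y → G.Adj x y := by
    intro x y hxy
    exact bic_mono (Finset.subset_insert c S') hxy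
  -- generic extraction of a hamiltonian path of the component as a list in G
  have pathlist : ∀ (x y : ZMod m × Bool) (hx : x ∈ K) (hy : y ∈ K)
      (pw : (G'.induce K).Walk ⟨x, hx⟩ ⟨y, hy⟩), pw.IsHamiltonian →
      ∃ L : List (ZMod m × Bool), L.Nodup ∧ L.IsChain G.Adj ∧ L.head? = some x ∧
        L.getLast? = some y ∧ (∀ v, v ∈ L ↔ v.1 ∈ W) := by
    intro x y hx hy pw hpw
    refine ⟨pw.support.map Subtype.val, ?_, ?_, ?_, ?_, ?_⟩
    · exact (hpw.isPath.support_nodup).map Subtype.val_injective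
    · rw [List.isChain_map]
      refine (SimpleGraph.Walk.isChain_adj_support pw).imp ?_
      intro u v huv
      exact hmono huv
    · rw [List.head?_map, pw.support_eq_cons]
      rfl
    · rw [List.getLast?_map, List.getLast?_eq_getLast pw.support_ne_nil,
        pw.getLast_support]
      rfl
    · intro v
      rw [List.mem_map]
      constructor
      · rintro ⟨u, hu, rfl⟩
        exact (hKmem _).1 u.2
      · intro hv
        exact ⟨⟨v, (hKmem v).2 hv⟩, hpw.mem_support _, rfl⟩
  -- generic extraction of the cycle data
  have cyclist : ∀ (yv zv : K), (∃ (xC : K)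
      (pC : (G'.induce K).Walk xC xC), pC.IsHamiltonianCycle ∧ s(yv, zv) ∈ pC.edges) →
      ∃ M : List (ZMod m × Bool), M.Nodup ∧ M.IsChain G.Adj ∧
        (∀ v, v ∈ M ↔ v.1 ∈ W) ∧ G.Adj ↑yv ↑zv ∧
        ((M.head? = some ↑yv ∧ M.getLast? = some ↑zv) ∨
         (M.head? = some ↑zv ∧ M.getLast? = some ↑yv)) := by
    rintro yv zv ⟨xC, pC, hpC, he⟩
    obtain ⟨L0, hnd0, hch0, hcov0, hends⟩ := cycle_split pC hpC he
    refine ⟨L0.map Subtype.val, hnd0.map Subtype.val_injective, ?_, ?_, ?_, ?_⟩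
    · rw [List.isChain_map]
      exact hch0.imp (fun {u v} huv => hmono huv)
    · intro v
      rw [List.mem_map]
      constructor
      · rintro ⟨u, hu, rfl⟩
        exact (hKmem _).1 u.2
      · intro hv
        exact ⟨⟨v, (hKmem v).2 hv⟩, hcov0 _, rfl⟩
    · exact hmono (pC.adj_of_mem_edges he)
    · rcases hends with ⟨hh, hl⟩ | ⟨hh, hl⟩
      · exact Or.inl ⟨by rw [List.head?_map, hh]; rfl,
          by rw [List.getLast?_map, hl]; rfl⟩
      · exact Or.inr ⟨by rw [List.head?_map, hh]; rfl,
          by rw [List.getLast?_map, hl]; rfl⟩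
  obtain ⟨xC, pC, hpC, hOuter, hInner⟩ := hcycle
  rcases hpath with ⟨h₀, h₁, pw, hpw⟩ | ⟨h₀, h₁, pw, hpw⟩
  · -- case 1 : u-path, use inner edge of the cycle, γ = c, σ = false, β = b
    obtain ⟨LP, hLPnd, hLPch, hLPhead, hLPlast, hLPmem⟩ :=
      pathlist ((0 : ZMod m), false) ((b : ZMod m), false) h₀ h₁ pw hpw
    obtain ⟨yv, zv, he, hy2, hz2⟩ := hInner
    obtain ⟨M, hMnd, hMch, hMmem, hMadj, hMends⟩ := cyclist yv zv ⟨xC, pC, hpC, he⟩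
    have hyval : (yv : ZMod m × Bool) = ((yv : ZMod m × Bool).1, true) :=
      Prod.ext rfl hy2
    have hzval : (zv : ZMod m × Bool) = ((zv : ZMod m × Bool).1, true) :=
      Prod.ext rfl hz2
    obtain ⟨d, hpart⟩ := part_exists W c c (Or.inl rfl) htop
    have hspoke : ∀ h : ZMod m, G.Adj (h, false) (h + c, !false) := by
      intro h
      simpa using bic_spoke {a, -a} (insert c S') {b, -b} (Finset.mem_insert_self c S') h
    have hinner : ∀ x y : ZMod m, G.Adj (x, !false) (y, !false) → y - x = b ∨ x - y = b := by
      intro x y hxy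
      exact bic_inner (by simpa using hxy)
    have hadj' : G.Adj ((yv : ZMod m × Bool).1, !false) ((zv : ZMod m × Bool).1, !false) := by
      have := hMadj
      rw [hyval, hzval] at this
      simpa using this
    rcases hMends with ⟨hh, hl⟩ | ⟨hh, hl⟩
    · exact assemble G false c b W d
        (fun t x y h => bic_shift {a, -a} (insert c S') {b, -b} t x y h)
        hspoke hinner hpart hcard LP hLPnd hLPch hLPhead hLPlast hLPmem
        M (yv : ZMod m × Bool).1 (zv : ZMod m × Bool).1 hMnd hMch
        (by rw [hh]; exact congrArg some (Prod.ext rfl hy2)) (by rw [hl]; exact congrArg some (Prod.ext rfl hz2)) hadj' hMmem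
    · exact assemble G false c b W d
        (fun t x y h => bic_shift {a, -a} (insert c S') {b, -b} t x y h)
        hspoke hinner hpart hcard LP hLPnd hLPch hLPhead hLPlast hLPmem
        M (zv : ZMod m × Bool).1 (yv : ZMod m × Bool).1 hMnd hMch
        (by rw [hh]; exact congrArg some (Prod.ext rfl hz2)) (by rw [hl]; exact congrArg some (Prod.ext rfl hy2)) hadj'.symm hMmem
  · -- case 2 : v-path, use outer edge of the cycle, γ = -c, σ = true, β = a
    obtain ⟨LP, hLPnd, hLPch, hLPhead, hLPlast, hLPmem⟩ :=
      pathlist ((0 : ZMod m), true) ((a : ZMod m), true) h₀ h₁ pw hpw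
    obtain ⟨yv, zv, he, hy2, hz2⟩ := hOuter
    obtain ⟨M, hMnd, hMch, hMmem, hMadj, hMends⟩ := cyclist yv zv ⟨xC, pC, hpC, he⟩
    have hyval : (yv : ZMod m × Bool) = ((yv : ZMod m × Bool).1, false) :=
      Prod.ext rfl hy2
    have hzval : (zv : ZMod m × Bool) = ((zv : ZMod m × Bool).1, false) :=
      Prod.ext rfl hz2
    obtain ⟨d, hpart⟩ := part_exists W c (-c) (Or.inr rfl) htop
    have hspoke : ∀ h : ZMod m, G.Adj (h, true) (h + -c, !true) := by
      intro h
      have h0 := bic_spoke {a, -a} (insert c S') {b, -b}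
        (Finset.mem_insert_self c S') (h + -c)
      have e : (h + -c) + c = h := by ring
      rw [e] at h0
      exact h0.symm
    have hinner : ∀ x y : ZMod m, G.Adj (x, !true) (y, !true) → y - x = a ∨ x - y = a := by
      intro x y hxy
      exact bic_outer (by simpa using hxy)
    have hadj' : G.Adj ((yv : ZMod m × Bool).1, !true) ((zv : ZMod m × Bool).1, !true) := by
      have := hMadj
      rw [hyval, hzval] at this
      simpa using this
    rcases hMends with ⟨hh, hl⟩ | ⟨hh, hl⟩
    · exact assemble G true (-c) a W d
        (fun t x y h => bic_shift {a, -a} (insert c S') {b, -b} t x y h)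
        hspoke hinner hpart hcard LP hLPnd hLPch hLPhead hLPlast hLPmem
        M (yv : ZMod m × Bool).1 (zv : ZMod m × Bool).1 hMnd hMch
        (by rw [hh]; exact congrArg some (Prod.ext rfl hy2)) (by rw [hl]; exact congrArg some (Prod.ext rfl hz2)) hadj' hMmem
    · exact assemble G true (-c) a W d
        (fun t x y h => bic_shift {a, -a} (insert c S') {b, -b} t x y h)
        hspoke hinner hpart hcard LP hLPnd hLPch hLPhead hLPlast hLPmem
        M (zv : ZMod m × Bool).1 (yv : ZMod m × Bool).1 hMnd hMch
        (by rw [hh]; exact congrArg some (Prod.ext rfl hz2)) (by rw [hl]; exact congrArg some (Prod.ext rfl hy2)) hadj'.symm hMmem
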